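/- arXiv:2004.07321 — 7 statements merged into one kernel-verified Lean document; each statement's English description precedes it below -/
import Mathlib

section
/- Let M be a directly finite monoid with group of units U. Then Rank(M) = Rank(U) + Rank(M : U), where Rank(M) is the minimal cardinality of a monoid generating set of M, Rank(U) the minimal cardinality of a monoid generating set of the group U, and Rank(M : U) the minimal cardinality of a set W with ⟨U ∪ W⟩ = M. -/
/-- The rank of a monoid: the least cardinality of a monoid generating set. -/
noncomputable def monoidRank (M : Type*) [Monoid M] : Cardinal :=
  ⨅ T : {T : Set M // Submonoid.closure T = ⊤}, Cardinal.mk T.1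

/-- The relative rank of a subset `R` in a monoid `M`. -/
noncomputable def relRank (M : Type*) [Monoid M] (R : Set M) : Cardinal :=
  ⨅ W : {W : Set M // Submonoid.closure (R ∪ W) = ⊤}, Cardinal.mk W.1

private lemma isUnit_both {M : Type*} [Monoid M]
    (hdf : ∀ a b : M, a * b = 1 → b * a = 1) {a b : M}
    (h : IsUnit (a * b)) : IsUnit a ∧ IsUnit b := by
  obtain ⟨u, hu⟩ := h
  have h1 : a * (b * ↑u⁻¹) = 1 := by rw [← mul_assoc, ← hu]; exact u.mul_inv
  have h2 : (↑u⁻¹ * a) * b = 1 := by rw [mul_assoc, ← hu]; exact u.inv_mul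
  exact ⟨⟨⟨a, b * ↑u⁻¹, h1, hdf _ _ h1⟩, rfl⟩,
    ⟨⟨b, ↑u⁻¹ * a, hdf _ _ h2, h2⟩, rfl⟩⟩

theorem rank_eq_rank_units_add_relRank {M : Type*} [Monoid M]
    (hdf : ∀ a b : M, a * b = 1 → b * a = 1) :
    monoidRank M = monoidRank (IsUnit.submonoid M) + relRank M {u : M | IsUnit u} := by
  have hneT : Nonempty {T : Set M // Submonoid.closure T = ⊤} :=
    ⟨⟨Set.univ, Submonoid.closure_univ⟩⟩
  have hneS : Nonempty {T : Set (IsUnit.submonoid M) // Submonoid.closure T = ⊤} :=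
    ⟨⟨Set.univ, Submonoid.closure_univ⟩⟩
  have hneW : Nonempty {W : Set M //
      Submonoid.closure ({u : M | IsUnit u} ∪ W) = ⊤} :=
    ⟨⟨Set.univ, by rw [Set.union_univ]; exact Submonoid.closure_univ⟩⟩
  apply le_antisymm
  · -- ≤ : combine optimal generating sets
    obtain ⟨S, hS⟩ := ciInf_mem
      (fun T : {T : Set (IsUnit.submonoid M) // Submonoid.closure T = ⊤} =>
        Cardinal.mk T.1)
    obtain ⟨W, hW⟩ := ciInf_mem
      (fun W : {W : Set M // Submonoid.closure ({u : M | IsUnit u} ∪ W) = ⊤} =>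
        Cardinal.mk W.1)
    have hSclos : Submonoid.closure (Subtype.val '' S.1 ∪ W.1) = ⊤ := by
      have hmap : (Submonoid.closure S.1).map (IsUnit.submonoid M).subtype =
          Submonoid.closure (Subtype.val '' S.1) :=
        MonoidHom.map_mclosure _ _
      have hU : {u : M | IsUnit u} ⊆ ↑(Submonoid.closure (Subtype.val '' S.1 ∪ W.1)) := by
        intro x hx
        have hx' : x ∈ Submonoid.closure (Subtype.val '' S.1) := by
          rw [← hmap]
          exact Submonoid.mem_map.2 ⟨⟨x, hx⟩, by rw [S.2]; trivial, rfl⟩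
        exact Submonoid.closure_mono Set.subset_union_left hx'
      have hle : Submonoid.closure ({u : M | IsUnit u} ∪ W.1) ≤
          Submonoid.closure (Subtype.val '' S.1 ∪ W.1) :=
        Submonoid.closure_le.2 (Set.union_subset hU
          (fun x hx => Submonoid.subset_closure (Set.subset_union_right hx)))
      rw [W.2] at hle
      exact top_unique hle
    calc monoidRank M ≤ Cardinal.mk ↥(Subtype.val '' S.1 ∪ W.1) :=
          ciInf_le' _ (⟨_, hSclos⟩ : {T : Set M // Submonoid.closure T = ⊤})
      _ ≤ Cardinal.mk ↥(Subtype.val '' S.1) + Cardinal.mk ↥W.1 := Cardinal.mk_union_le _ _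
      _ = Cardinal.mk ↥S.1 + Cardinal.mk ↥W.1 := by
          rw [Cardinal.mk_image_eq Subtype.val_injective]
      _ = monoidRank (IsUnit.submonoid M) + relRank M {u : M | IsUnit u} :=
          congrArg₂ (· + ·) hS hW
  · -- ≥ : split an optimal generating set
    obtain ⟨T, hT⟩ := ciInf_mem
      (fun T : {T : Set M // Submonoid.closure T = ⊤} => Cardinal.mk T.1)
    set S : Set (IsUnit.submonoid M) := {x | (x : M) ∈ T.1} with hSdef
    -- closure S = ⊤ in the units submonoid
    have hScl : Submonoid.closure S = ⊤ := by
      set N := Submonoid.closure S with hN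
      let P : Submonoid M :=
        { carrier := {x : M | ∀ h : IsUnit x, (⟨x, h⟩ : IsUnit.submonoid M) ∈ N}
          one_mem' := fun h => N.one_mem
          mul_mem' := by
            intro a b ha hb h
            obtain ⟨hua, hub⟩ := isUnit_both hdf h
            exact N.mul_mem (ha hua) (hb hub) }
      have hTP : Submonoid.closure T.1 ≤ P :=
        Submonoid.closure_le.2 (fun t ht h => Submonoid.subset_closure ht)
      rw [T.2] at hTP
      rw [eq_top_iff]
      intro u _
      exact hTP (Submonoid.mem_top u.1) u.2
    have hWcl : Submonoid.closure ({u : M | IsUnit u} ∪ (T.1 \ {u : M | IsUnit u})) = ⊤ := by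
      have hle : Submonoid.closure T.1 ≤
          Submonoid.closure ({u : M | IsUnit u} ∪ (T.1 \ {u : M | IsUnit u})) := by
        rw [Submonoid.closure_le]
        intro t ht
        by_cases h : IsUnit t
        · exact Submonoid.subset_closure (Or.inl h)
        · exact Submonoid.subset_closure (Or.inr ⟨ht, h⟩)
      rw [T.2] at hle
      exact top_unique hle
    have hmkS : Cardinal.mk ↥S = Cardinal.mk ↥(T.1 ∩ {u : M | IsUnit u}) :=
      Cardinal.mk_congr
        { toFun := fun x => ⟨x.1.1, x.2, x.1.2⟩
          invFun := fun y => ⟨⟨y.1, y.2.2⟩, y.2.1⟩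
          left_inv := fun x => rfl
          right_inv := fun y => rfl }
    have hsplit : Cardinal.mk ↥(T.1 ∩ {u : M | IsUnit u}) +
        Cardinal.mk ↥(T.1 \ {u : M | IsUnit u}) = Cardinal.mk ↥T.1 := by
      rw [← Cardinal.mk_union_of_disjoint (disjoint_sdiff_self_right.mono_left Set.inter_subset_right), Set.inter_union_diff]
    calc monoidRank (IsUnit.submonoid M) + relRank M {u : M | IsUnit u}
        ≤ Cardinal.mk ↥S + Cardinal.mk ↥(T.1 \ {u : M | IsUnit u}) := by
          gcongr
          · exact ciInf_le' _ (⟨S, hScl⟩ :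
              {T : Set (IsUnit.submonoid M) // Submonoid.closure T = ⊤})
          · exact ciInf_le' _ (⟨_, hWcl⟩ :
              {W : Set M // Submonoid.closure ({u : M | IsUnit u} ∪ W) = ⊤})
      _ = Cardinal.mk ↥T.1 := by rw [hmkS, hsplit]
      _ = monoidRank M := hT
end

section
/- Let G be a group and A a finite set. A cellular automaton τ : A^G → A^G has a left inverse in the monoid End(A^G) of cellular automata (there exists a cellular automaton σ with σ ∘ τ = id) if and only if τ is injective. -/
/-- A cellular automaton over `A^G`: a map admitting a finite memory set `S` and a
local rule `μ : A^S → A` with `τ(x)(g) = μ((g⁻¹ · x)|_S)`, where the shift action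
is `(g · x)(h) = x(g⁻¹ h)`, so `(g⁻¹ · x)(s) = x (g * s)`. -/
def IsCellularAutomaton {G A : Type*} [Group G] (τ : (G → A) → G → A) : Prop :=
  ∃ S : Set G, S.Finite ∧ ∃ μ : (S → A) → A, ∀ x g, τ x g = μ fun s => x (g * s.1)

open Filter

theorem leftInvertible_iff_injective_CA {G A : Type*} [Group G] [Finite A]
    (τ : (G → A) → G → A) (hτ : IsCellularAutomaton τ) :
    (∃ σ : (G → A) → G → A, IsCellularAutomaton σ ∧ σ ∘ τ = id) ↔
      Function.Injective τ := by
  classical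
  constructor
  · rintro ⟨σ, -, hσ⟩
    intro x y hxy
    have hx := congrFun hσ x
    have hy := congrFun hσ y
    simp only [Function.comp_apply, id_eq] at hx hy
    rw [← hx, ← hy, hxy]
  · intro hinj
    obtain ⟨S, hSfin, μ₀, hμ₀⟩ := hτ
    have equiv : ∀ (x : G → A) (g t : G), τ (fun h => x (g * h)) t = τ x (g * t) := by
      intro x g t
      rw [hμ₀, hμ₀]
      congr 1
      funext s
      rw [mul_assoc]
    -- Key compactness lemma
    have key : ∃ T : Finset G, ∀ x y : G → A, (∀ t ∈ T, τ x t = τ y t) → x 1 = y 1 := by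
      by_contra hcon
      push_neg at hcon
      choose X Y hXY hne using hcon
      set U := Ultrafilter.of (atTop : Filter (Finset G)) with hU
      have hUle : (U : Filter (Finset G)) ≤ atTop := Ultrafilter.of_le _
      have lim : ∀ f : Finset G → A, ∃ a, {T | f T = a} ∈ U := by
        intro f
        by_contra h
        push_neg at h
        have hc : ∀ a : A, {T | f T = a}ᶜ ∈ U := fun a =>
          (Ultrafilter.compl_mem_iff_notMem).2 (h a)
        have hint : (⋂ a : A, {T | f T = a}ᶜ) ∈ U := (Filter.iInter_mem).2 hc
        have hempty : (⋂ a : A, {T | f T = a}ᶜ) = ∅ := by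
          ext T
          simp
        rw [hempty] at hint
        exact Filter.empty_notMem (U : Filter (Finset G)) hint
      choose xs hxs using fun g => lim (fun T => X T g)
      choose ys hys using fun g => lim (fun T => Y T g)
      have hτeq : τ xs = τ ys := by
        funext g
        have h1 : ∀ᶠ T in (U : Filter (Finset G)), g ∈ T :=
          hUle (mem_atTop_sets.2 ⟨{g}, fun T hT => hT (Finset.mem_singleton_self g)⟩)
        have h2 : ∀ᶠ T in (U : Filter (Finset G)),
            ∀ s ∈ hSfin.toFinset, X T (g * s) = xs (g * s) ∧ Y T (g * s) = ys (g * s) := by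
          rw [eventually_all_finset]
          intro s _
          exact Filter.inter_mem (hxs (g * s)) (hys (g * s))
        obtain ⟨T, hg, hs⟩ := (h1.and h2).exists
        calc τ xs g = μ₀ (fun s => xs (g * s.1)) := hμ₀ _ _
          _ = μ₀ (fun s => X T (g * s.1)) := by
              congr 1
              funext s
              exact ((hs s.1 (hSfin.mem_toFinset.2 s.2)).1).symm
          _ = τ (X T) g := (hμ₀ _ _).symm
          _ = τ (Y T) g := hXY T g hg
          _ = μ₀ (fun s => Y T (g * s.1)) := hμ₀ _ _
          _ = μ₀ (fun s => ys (g * s.1)) := by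
              congr 1
              funext s
              exact (hs s.1 (hSfin.mem_toFinset.2 s.2)).2
          _ = τ ys g := (hμ₀ _ _).symm
      have hxy : xs = ys := hinj hτeq
      have h1 : ∀ᶠ T in (U : Filter (Finset G)), X T 1 = xs 1 := hxs 1
      have h2 : ∀ᶠ T in (U : Filter (Finset G)), Y T 1 = ys 1 := hys 1
      obtain ⟨T, hX1, hY1⟩ := (h1.and h2).exists
      exact hne T (by rw [hX1, hY1, hxy])
    -- Construct the inverse cellular automaton
    obtain ⟨T, hT⟩ := key
    set T' : Finset G := insert 1 T with hT'
    set St : Set G := ↑T' with hSt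
    have h1T' : (1 : G) ∈ St := by simp [hSt, hT']
    set μ : (St → A) → A := fun p =>
      if h : ∃ w : G → A, ∀ t : St, τ w t.1 = p t then h.choose 1 else p ⟨1, h1T'⟩ with hμ
    refine ⟨fun y g => μ (fun s => y (g * s.1)), ⟨St, T'.finite_toSet, μ, fun x g => rfl⟩, ?_⟩
    funext x g
    simp only [Function.comp_apply, id_eq]
    show μ (fun s : St => τ x (g * s.1)) = x g
    have hp : (fun s : St => τ x (g * s.1)) = fun s => τ (fun h => x (g * h)) s.1 := by
      funext s
      exact (equiv x g s.1).symm
    rw [hp, hμ]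
    beta_reduce
    have hex : ∃ w : G → A, ∀ t : St, τ w t.1 = τ (fun h => x (g * h)) t.1 :=
      ⟨_, fun t => rfl⟩
    rw [dif_pos hex]
    have hz := hex.choose_spec
    have hend : hex.choose 1 = (fun h => x (g * h)) 1 :=
      hT _ _ (fun t ht => hz ⟨t, by simp [hSt, hT', ht]⟩)
    simpa using hend
end

section
/- A group G is surjunctive (for every finite set A, every injective cellular automaton over A^G is surjective) if and only if for every finite set A the monoid End(A^G) of cellular automata over A^G is directly finite (τ ∘ σ = id implies σ ∘ τ = id). -/
/-- Equivariance of a cellular automaton with respect to the shift. -/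
lemma IsCellularAutomaton.shift {G A : Type*} [Group G] {τ : (G → A) → G → A}
    (hτ : IsCellularAutomaton τ) (x : G → A) (g t : G) :
    τ (fun h => x (g * h)) t = τ x (g * t) := by
  obtain ⟨S, _, μ, hμ⟩ := hτ
  rw [hμ, hμ]
  simp [mul_assoc]

/-- Compactness argument: an injective cellular automaton over a finite alphabet admits a
finite "window" `T` such that the value of a configuration at `1` is determined by the
restriction of its image to `T`. -/
lemma exists_window {G A : Type*} [Group G] [Finite A] (τ : (G → A) → G → A)
    (hτ : IsCellularAutomaton τ) (hinj : Function.Injective τ) :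
    ∃ T : Finset G, ∀ z y : G → A, (∀ t ∈ T, τ z t = τ y t) → z 1 = y 1 := by
  classical
  obtain ⟨S, hS, μ, hμ⟩ := hτ
  haveI : Finite ↥S := hS.to_subtype
  by_contra hcon
  push_neg at hcon
  letI : TopologicalSpace A := ⊥
  haveI : DiscreteTopology A := ⟨rfl⟩
  set K : Finset G → Set ((G → A) × (G → A)) :=
    fun T => {p | (∀ t ∈ T, τ p.1 t = τ p.2 t) ∧ p.1 1 ≠ p.2 1} with hK
  have hcontτ : ∀ t : G, Continuous (fun x : G → A => τ x t) := by
    intro t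
    have : (fun x : G → A => τ x t) = (fun q : ↥S → A => μ q) ∘
        (fun x : G → A => fun s : ↥S => x (t * s.1)) := by
      funext x; exact hμ x t
    rw [this]
    exact continuous_of_discreteTopology.comp
      (continuous_pi fun s => continuous_apply _)
  have hclosed : ∀ T, IsClosed (K T) := by
    intro T
    have h1 : IsClosed {p : (G → A) × (G → A) | ∀ t ∈ T, τ p.1 t = τ p.2 t} := by
      have : {p : (G → A) × (G → A) | ∀ t ∈ T, τ p.1 t = τ p.2 t} =
          ⋂ t ∈ T, {p | τ p.1 t = τ p.2 t} := by
        ext p; simp [Set.mem_iInter]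
      rw [this]
      exact isClosed_biInter fun t _ =>
        isClosed_eq ((hcontτ t).comp continuous_fst) ((hcontτ t).comp continuous_snd)
    have h2 : IsClosed {p : (G → A) × (G → A) | p.1 1 ≠ p.2 1} := by
      have he : {p : (G → A) × (G → A) | p.1 1 ≠ p.2 1} =
          {p : (G → A) × (G → A) | p.1 1 = p.2 1}ᶜ := rfl
      rw [he]
      apply IsOpen.isClosed_compl
      have he2 : {p : (G → A) × (G → A) | p.1 1 = p.2 1} =
          (fun p : (G → A) × (G → A) => (p.1 1, p.2 1)) ⁻¹' {q : A × A | q.1 = q.2} := rfl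
      rw [he2]
      exact (isOpen_discrete _).preimage
        (((continuous_apply 1).comp continuous_fst).prodMk
          ((continuous_apply 1).comp continuous_snd))
    exact h1.inter h2
  have hdir : Directed (· ⊇ ·) K := by
    intro T T'
    refine ⟨T ∪ T', ?_, ?_⟩
    · intro p hp
      exact ⟨fun t ht => hp.1 t (Finset.mem_union_left _ ht), hp.2⟩
    · intro p hp
      exact ⟨fun t ht => hp.1 t (Finset.mem_union_right _ ht), hp.2⟩
  have hne : ∀ T, (K T).Nonempty := by
    intro T
    obtain ⟨z, y, h1, h2⟩ := hcon T
    exact ⟨(z, y), h1, h2⟩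
  have hcomp : ∀ T, IsCompact (K T) := fun T => (hclosed T).isCompact
  obtain ⟨⟨z, y⟩, hzy⟩ :=
    IsCompact.nonempty_iInter_of_directed_nonempty_isCompact_isClosed K hdir hne hcomp hclosed
  have hall : ∀ T, (z, y) ∈ K T := fun T => Set.mem_iInter.mp hzy T
  have heq : τ z = τ y := by
    funext g
    exact (hall {g}).1 g (Finset.mem_singleton_self g)
  exact (hall ∅).2 (congrFun (hinj heq) 1)

theorem surjunctive_iff_directlyFinite (G : Type u) [Group G] :
    (∀ (A : Type) (_ : Finite A), ∀ τ : (G → A) → G → A,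
        IsCellularAutomaton τ → Function.Injective τ → Function.Surjective τ) ↔
      (∀ (A : Type) (_ : Finite A), ∀ τ σ : (G → A) → G → A,
        IsCellularAutomaton τ → IsCellularAutomaton σ →
          τ ∘ σ = id → σ ∘ τ = id) := by
  constructor
  · -- surjunctive → directly finite
    intro hsurj A hA τ σ hτ hσ hτσ
    have hσinj : Function.Injective σ :=
      Function.LeftInverse.injective (g := τ) (fun x => congrFun hτσ x)
    have hσsurj : Function.Surjective σ := hsurj A hA σ hσ hσinj
    funext x
    obtain ⟨y, rfl⟩ := hσsurj x
    have : τ (σ y) = y := congrFun hτσ y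
    simp [this]
  · -- directly finite → surjunctive
    intro hdf A hA τ hτ hinj
    rcases isEmpty_or_nonempty A with hA' | hA'
    · intro y
      exact (hA'.false (y 1)).elim
    · classical
      obtain ⟨T, hT⟩ := exists_window τ hτ hinj
      set ν : (↥(↑T : Set G) → A) → A := fun p =>
        if h : ∃ x : G → A, ∀ t : ↥(↑T : Set G), τ x t.1 = p t then h.choose 1
        else Classical.arbitrary A with hν
      set σ : (G → A) → G → A := fun x g => ν (fun t => x (g * t.1)) with hσ
      have hσCA : IsCellularAutomaton σ := ⟨↑T, T.finite_toSet, ν, fun x g => rfl⟩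
      have hleft : σ ∘ τ = id := by
        funext x
        funext g
        show ν (fun t => τ x (g * t.1)) = x g
        have hex : ∃ w : G → A, ∀ t : ↥(↑T : Set G), τ w t.1 = τ x (g * t.1) :=
          ⟨fun h => x (g * h), fun t => hτ.shift x g t.1⟩
        rw [hν]
        simp only [dif_pos hex]
        have hz := hex.choose_spec
        have hmain : hex.choose 1 = (fun h => x (g * h)) 1 :=
          hT hex.choose (fun h => x (g * h)) (fun t ht => by rw [hz ⟨t, ht⟩]; exact (hτ.shift x g t).symm)
        simpa using hmain
      have hright : τ ∘ σ = id := hdf A hA σ τ hσCA hτ hleft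
      intro y
      exact ⟨σ y, congrFun hright y⟩
end

section
/- Let G be a surjunctive group and A a finite set. Then Rank(End(A^G)) = Rank(Aut(A^G)) + Rank(End(A^G) : Aut(A^G)); in particular Rank(Aut(A^G)) ≤ Rank(End(A^G)), so if End(A^G) is finitely generated then so is Aut(A^G). -/
open Pointwise

/-- The monoid `End(A^G)` of all cellular automata over `A^G` under composition,
as a submonoid of `Function.End (G → A)`. -/
def CAMonoid (G A : Type*) [Group G] : Submonoid (Function.End (G → A)) where
  carrier := {τ | IsCellularAutomaton τ}
  one_mem' := by
    refine ⟨{1}, Set.finite_singleton 1, fun f => f ⟨1, rfl⟩, fun x g => ?_⟩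
    show x g = x (g * 1)
    rw [mul_one]
  mul_mem' := by
    rintro a b ⟨S, hS, μ, hμ⟩ ⟨T, hT, ν, hν⟩
    refine ⟨S * T, hS.mul hT,
      fun y => μ fun s => ν fun t => y ⟨s.1 * t.1, Set.mul_mem_mul s.2 t.2⟩,
      fun x g => ?_⟩
    show a (b x) g = _
    rw [hμ]
    congr 1
    funext s
    rw [hν]
    congr 1
    funext t
    rw [mul_assoc]

section General

variable {M : Type*} [Monoid M]

lemma df_isUnit_mul (df : ∀ a b : M, a * b = 1 → b * a = 1) {x y : M}
    (h : IsUnit (x * y)) : IsUnit x ∧ IsUnit y := by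
  obtain ⟨u, hu⟩ := h
  have hx : x * (y * ↑u⁻¹) = 1 := by rw [← mul_assoc, ← hu, Units.mul_inv]
  have hy' : (↑u⁻¹ * x) * y = 1 := by rw [mul_assoc, ← hu, Units.inv_mul]
  exact ⟨⟨⟨x, y * ↑u⁻¹, hx, df _ _ hx⟩, rfl⟩,
    ⟨⟨y, ↑u⁻¹ * x, df _ _ hy', hy'⟩, rfl⟩⟩

lemma df_unit_mem_closure_inter (df : ∀ a b : M, a * b = 1 → b * a = 1) {T : Set M}
    (hT : Submonoid.closure T = ⊤) {x : M} (hx : IsUnit x) :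
    x ∈ Submonoid.closure (T ∩ {u | IsUnit u}) := by
  have hxT : x ∈ Submonoid.closure T := hT ▸ Submonoid.mem_top x
  revert hx
  induction hxT using Submonoid.closure_induction with
  | mem t ht => exact fun hu => Submonoid.subset_closure ⟨ht, hu⟩
  | one => exact fun _ => one_mem _
  | mul a b _ _ ha hb =>
      exact fun hu => mul_mem (ha (df_isUnit_mul df hu).1) (hb (df_isUnit_mul df hu).2)

lemma exists_rank_witness (M : Type*) [Monoid M] :
    ∃ T : Set M, Submonoid.closure T = ⊤ ∧ Cardinal.mk T = monoidRank M := by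
  have hne : Nonempty {T : Set M // Submonoid.closure T = ⊤} :=
    ⟨⟨Set.univ, Submonoid.closure_univ⟩⟩
  obtain ⟨⟨T, hT⟩, h⟩ := csInf_mem (Set.range_nonempty
    (fun T : {T : Set M // Submonoid.closure T = ⊤} => Cardinal.mk T.1))
  exact ⟨T, hT, h⟩

lemma exists_relRank_witness (M : Type*) [Monoid M] (R : Set M) :
    ∃ W : Set M, Submonoid.closure (R ∪ W) = ⊤ ∧ Cardinal.mk W = relRank M R := by
  have hne : Nonempty {W : Set M // Submonoid.closure (R ∪ W) = ⊤} :=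
    ⟨⟨Set.univ, by rw [Set.union_univ]; exact Submonoid.closure_univ⟩⟩
  obtain ⟨⟨W, hW⟩, h⟩ := csInf_mem (Set.range_nonempty
    (fun W : {W : Set M // Submonoid.closure (R ∪ W) = ⊤} => Cardinal.mk W.1))
  exact ⟨W, hW, h⟩

lemma df_rank_eq (df : ∀ a b : M, a * b = 1 → b * a = 1) :
    monoidRank M = monoidRank (IsUnit.submonoid M) + relRank M {u : M | IsUnit u} := by
  set U := IsUnit.submonoid M
  apply le_antisymm
  · obtain ⟨S, hS, hScard⟩ := exists_rank_witness U
    obtain ⟨W, hW, hWcard⟩ := exists_relRank_witness M {u : M | IsUnit u}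
    set S' : Set M := (U.subtype) '' S with hS'def
    have hclS' : Submonoid.closure S' = U := by
      rw [← MonoidHom.map_mclosure, hS, ← MonoidHom.mrange_eq_map,
        Submonoid.mrange_subtype]
    have hcl : Submonoid.closure (S' ∪ W) = ⊤ := by
      rw [eq_top_iff, ← hW]
      apply Submonoid.closure_le.mpr
      rintro x (hx | hx)
      · exact Submonoid.closure_mono Set.subset_union_left (hclS' ▸ hx)
      · exact Submonoid.subset_closure (Or.inr hx)
    calc monoidRank M ≤ Cardinal.mk ↥(S' ∪ W) :=
          ciInf_le' (fun T : {T : Set M // Submonoid.closure T = ⊤} => Cardinal.mk T.1)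
            ⟨S' ∪ W, hcl⟩
      _ ≤ Cardinal.mk S' + Cardinal.mk W := Cardinal.mk_union_le _ _
      _ ≤ Cardinal.mk S + Cardinal.mk W := by
          exact add_le_add (Cardinal.mk_image_le) le_rfl
      _ = _ := by rw [hScard, hWcard]
  · obtain ⟨T, hT, hTcard⟩ := exists_rank_witness M
    set R : Set M := {u : M | IsUnit u}
    set T' : Set U := {u : U | (u : M) ∈ T} with hT'def
    have hclT' : Submonoid.closure T' = ⊤ := by
      rw [eq_top_iff]
      rintro u -
      have h1 : (u : M) ∈ Submonoid.closure (T ∩ R) :=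
        df_unit_mem_closure_inter df hT u.2
      have h2 : Submonoid.closure (T ∩ R) ≤ (Submonoid.closure T').map U.subtype := by
        apply Submonoid.closure_le.mpr
        rintro t ⟨ht, htu⟩
        exact ⟨⟨t, htu⟩, Submonoid.subset_closure ht, rfl⟩
      obtain ⟨v, hv, hveq⟩ := h2 h1
      rwa [show v = u from Subtype.ext hveq] at hv
    have h1 : monoidRank U ≤ Cardinal.mk T' :=
      ciInf_le' (fun S : {S : Set U // Submonoid.closure S = ⊤} => Cardinal.mk S.1)
        ⟨T', hclT'⟩
    have h2 : relRank M R ≤ Cardinal.mk ↥(T \ R) := by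
      refine ciInf_le' (fun W : {W : Set M // Submonoid.closure (R ∪ W) = ⊤} =>
        Cardinal.mk W.1) ⟨T \ R, ?_⟩
      rw [eq_top_iff, ← hT]
      apply Submonoid.closure_mono
      intro t ht
      by_cases h : IsUnit t
      · exact Or.inl h
      · exact Or.inr ⟨ht, h⟩
    have h3 : Cardinal.mk T' ≤ Cardinal.mk ↥(T ∩ R) := by
      refine Cardinal.mk_le_of_injective (f := fun x => ⟨x.1.1, x.2, x.1.2⟩) ?_
      intro a b h
      replace h := congrArg Subtype.val h
      exact Subtype.ext (Subtype.ext h)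
    have h4 : Cardinal.mk ↥(T ∩ R) + Cardinal.mk ↥(T \ R) = Cardinal.mk T := by
      rw [← Cardinal.mk_union_of_disjoint, Set.inter_union_diff]
      exact (Set.disjoint_sdiff_left).symm.mono_left Set.inter_subset_right
    calc monoidRank U + relRank M R ≤ Cardinal.mk T' + Cardinal.mk ↥(T \ R) :=
          add_le_add h1 h2
      _ ≤ Cardinal.mk ↥(T ∩ R) + Cardinal.mk ↥(T \ R) := add_le_add h3 le_rfl
      _ = Cardinal.mk T := h4
      _ = monoidRank M := hTcard

end General

theorem rank_CAMonoid_eq_of_surjunctive (G : Type) [Group G] (A : Type) [Finite A]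
    (hsurj : ∀ (B : Type) (_ : Finite B), ∀ τ : (G → B) → G → B,
      IsCellularAutomaton τ → Function.Injective τ → Function.Surjective τ) :
    monoidRank (CAMonoid G A) =
        monoidRank (IsUnit.submonoid (CAMonoid G A)) +
          relRank (CAMonoid G A) {u : CAMonoid G A | IsUnit u} ∧
      monoidRank (IsUnit.submonoid (CAMonoid G A)) ≤ monoidRank (CAMonoid G A) ∧
      (monoidRank (CAMonoid G A) < Cardinal.aleph0 →
        monoidRank (IsUnit.submonoid (CAMonoid G A)) < Cardinal.aleph0) := by
  have df : ∀ a b : CAMonoid G A, a * b = 1 → b * a = 1 := by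
    intro a b hab
    have habf : ∀ x, a.1 (b.1 x) = x := fun x => congrFun (congrArg Subtype.val hab) x
    have hinj : Function.Injective b.1 := Function.LeftInverse.injective habf
    have hsur : Function.Surjective b.1 := hsurj A ‹Finite A› b.1 b.2 hinj
    apply Subtype.ext
    funext x
    show b.1 (a.1 x) = x
    obtain ⟨y, hy⟩ := hsur x
    rw [← hy, habf y]
  refine ⟨df_rank_eq df, ?_, ?_⟩
  · rw [df_rank_eq df]
    exact self_le_add_right _ _
  · intro h
    calc monoidRank (IsUnit.submonoid (CAMonoid G A))
        ≤ monoidRank (CAMonoid G A) := by rw [df_rank_eq df]; exact self_le_add_right _ _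
      _ < Cardinal.aleph0 := h
end

section
/- The multiplicative group of units of an infinite field is not finitely generated. -/
instance int_isJacobsonRing : IsJacobsonRing ℤ := by
  rw [isJacobsonRing_iff_prime_eq]
  intro P hP
  rcases eq_or_ne P ⊥ with rfl | hPb
  · refine le_antisymm ?_ Ideal.le_jacobson
    intro x hx
    rw [Ideal.mem_jacobson_bot] at hx
    have h := hx x
    rw [Int.isUnit_iff] at h
    rcases h with h | h
    · have : x * x = 0 := by omega
      simpa using mul_self_eq_zero.mp this
    · nlinarith [mul_self_nonneg x]
  · haveI : P.IsMaximal := IsPrime.to_maximal_ideal hPb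
    exact Ideal.jacobson_eq_self_of_isMaximal

theorem units_of_infinite_field_not_fg (F : Type*) [Field F] [Infinite F] :
    ¬ Group.FG Fˣ := by
  intro h
  obtain ⟨S, hSc, hSf⟩ := Group.fg_iff.mp h
  -- T : generators and their inverses, as elements of F
  set T : Set F := ((↑) '' S) ∪ ((fun u : Fˣ => ((u⁻¹ : Fˣ) : F)) '' S) with hT
  have hTf : T.Finite := (hSf.image _).union (hSf.image _)
  have key : ∀ u : Fˣ, (u : F) ∈ Algebra.adjoin ℤ T ∧
      ((u⁻¹ : Fˣ) : F) ∈ Algebra.adjoin ℤ T := by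
    intro u
    have hu : u ∈ Subgroup.closure S := by rw [hSc]; trivial
    refine Subgroup.closure_induction ?_ ?_ ?_ ?_ hu
    · intro x hx
      exact ⟨Algebra.subset_adjoin (Or.inl ⟨x, hx, rfl⟩),
        Algebra.subset_adjoin (Or.inr ⟨x, hx, rfl⟩)⟩
    · exact ⟨by rw [Units.val_one]; exact one_mem _,
        by rw [inv_one, Units.val_one]; exact one_mem _⟩
    · intro x y _ _ hx hy
      refine ⟨by rw [Units.val_mul]; exact mul_mem hx.1 hy.1, ?_⟩
      rw [mul_inv_rev, Units.val_mul]
      exact mul_mem hy.2 hx.2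
    · intro x _ hx
      exact ⟨hx.2, by rw [inv_inv]; exact hx.1⟩
  have htop : Algebra.adjoin ℤ T = ⊤ := by
    rw [eq_top_iff]
    intro x _
    rcases eq_or_ne x 0 with rfl | hx
    · exact zero_mem _
    · exact (key (Units.mk0 x hx)).1
  haveI : Algebra.FiniteType ℤ F := ⟨⟨hTf.toFinset, by simpa using htop⟩⟩
  haveI : Module.Finite ℤ F := finite_of_finite_type_of_isJacobsonRing ℤ F
  obtain ⟨p, hp⟩ := CharP.exists F
  rcases CharP.char_is_prime_or_zero F p with hp' | hp'
  · haveI : Fact p.Prime := ⟨hp'⟩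
    letI : Algebra (ZMod p) F := ZMod.algebra F p
    haveI : Module.Finite (ZMod p) F := Module.Finite.of_restrictScalars_finite ℤ (ZMod p) F
    haveI : Finite F := Module.finite_of_finite (ZMod p)
    exact not_finite F
  · subst hp'
    haveI : CharZero F := CharP.charP_to_charZero F
    haveI : Algebra.IsIntegral ℤ F := Algebra.IsIntegral.of_finite ℤ F
    have h2 : IsIntegral ℤ ((algebraMap ℚ F) (1 / 2)) := Algebra.IsIntegral.isIntegral _
    have h3 : IsIntegral ℤ ((1 : ℚ) / 2) :=
      IsIntegral.tower_bot (algebraMap ℚ F).injective h2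
    obtain ⟨y, hy⟩ := IsIntegrallyClosed.isIntegral_iff.mp h3
    have : (y : ℚ) = 1 / 2 := by exact_mod_cast hy
    field_simp at this
    have h2y : (y * 2 : ℤ) = 1 := by exact_mod_cast this
    omega
end

section
/- Let V be a nonzero finite-dimensional vector space over an infinite field F and G any group. Then the monoid (under multiplication) of the group ring End(V)[G] ≅ End_F(V^G) is not finitely generated. -/
instance : IsJacobsonRing ℤ := isJacobsonRing_iff_prime_eq.mpr fun P hP => by
  rcases eq_or_ne P ⊥ with rfl | hb
  · refine eq_bot_iff.mpr fun x hx => ?_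
    rw [Ideal.mem_jacobson_bot] at hx
    have h1 := Int.isUnit_iff.mp (hx 1)
    have h2 := Int.isUnit_iff.mp (hx (-1))
    simp only [Ideal.mem_bot]
    omega
  · haveI := @IsPrime.to_maximal_ideal ℤ _ _ _ P hP hb
    exact Ideal.jacobson_eq_self_of_isMaximal

/-- An infinite field's multiplicative monoid is not finitely generated. -/
lemma mul_monoid_not_fg_of_infinite_field (F : Type*) [Field F] [Infinite F] :
    ¬ Monoid.FG F := by
  intro h
  obtain ⟨S, hS⟩ := h.1
  have hle : Submonoid.closure (S : Set F) ≤ (Algebra.adjoin ℤ (S : Set F)).toSubmonoid :=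
    Submonoid.closure_le.mpr Algebra.subset_adjoin
  have hft : Algebra.FiniteType ℤ F :=
    ⟨⟨S, eq_top_iff.mpr fun x _ => hle (hS ▸ Submonoid.mem_top x)⟩⟩
  haveI := hft
  haveI : Module.Finite ℤ F := finite_of_finite_type_of_isJacobsonRing ℤ F
  rcases eq_or_ne (ringChar F) 0 with hp | hp
  · haveI : CharP F 0 := hp ▸ ringChar.charP F
    haveI : CharZero F := CharP.charP_to_charZero F
    haveI : Algebra.IsIntegral ℤ F := Algebra.IsIntegral.of_finite ℤ F
    haveI : IsScalarTower ℤ ℚ F := IsScalarTower.of_algebraMap_eq (by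
      intro x
      simp)
    have h2 : IsIntegral ℤ (algebraMap ℚ F 2⁻¹) := Algebra.IsIntegral.isIntegral _
    have h3 : IsIntegral ℤ (2⁻¹ : ℚ) :=
      IsIntegral.tower_bot (algebraMap ℚ F).injective h2
    obtain ⟨y, hy⟩ := IsIntegrallyClosed.isIntegral_iff.mp h3
    have hy' : (y : ℚ) = 2⁻¹ := by rwa [eq_intCast] at hy
    have : ((2 * y : ℤ) : ℚ) = 1 := by push_cast [hy']; norm_num
    have : (2 * y : ℤ) = 1 := by exact_mod_cast this
    omega
  · haveI : Finite F := by
      apply Module.finite_of_fg_torsion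
      intro x
      refine ⟨⟨(ringChar F : ℤ), mem_nonZeroDivisors_of_ne_zero (by exact_mod_cast hp)⟩, ?_⟩
      haveI := ringChar.charP F
      have : ((ringChar F : ℤ) : F) = 0 := by
        push_cast
        exact CharP.cast_eq_zero F (ringChar F)
      simp only [Submonoid.mk_smul, zsmul_eq_mul, this, zero_mul]
    exact not_finite F

theorem linCA_monoid_not_fg_of_infinite_field (F : Type*) [Field F] [Infinite F]
    (V : Type*) [AddCommGroup V] [Module F V] [FiniteDimensional F V] [Nontrivial V]
    (G : Type*) [Group G] :
    ¬ Monoid.FG (MonoidAlgebra (Module.End F V) G) := by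
  intro h
  -- augmentation ring hom to End F V
  let aug : MonoidAlgebra (Module.End F V) G →+* Module.End F V :=
    MonoidAlgebra.liftNCRingHom (RingHom.id _) 1 (fun x y => by simp)
  have haug : Function.Surjective aug := by
    intro a
    refine ⟨MonoidAlgebra.single 1 a, ?_⟩
    simp [aug, MonoidAlgebra.liftNCRingHom, MonoidAlgebra.liftNC_single]
  -- determinant is surjective
  have hdet : Function.Surjective (LinearMap.det : Module.End F V →* F) := by
    intro c
    set n := Module.finrank F V with hn
    have hpos : 0 < n := Module.finrank_pos
    let b := Module.finBasis F V
    let i0 : Fin n := ⟨0, hpos⟩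
    refine ⟨Matrix.toLin b b (Matrix.diagonal (Function.update (1 : Fin n → F) i0 c)), ?_⟩
    rw [LinearMap.det_toLin, Matrix.det_diagonal,
      Finset.prod_update_of_mem (Finset.mem_univ i0)]
    simp
  have := Monoid.fg_of_surjective
    ((LinearMap.det : Module.End F V →* F).comp aug.toMonoidHom)
    ((hdet.comp haug))
  exact mul_monoid_not_fg_of_infinite_field F this
end

section
/- Let F be a field of characteristic p ≠ 2 and k ∈ ℕ. The group of units of the group algebra F[ℤ/2^k] requires at least k+1 generators; indeed F[ℤ/2^k] decomposes as a direct sum of at least k+1 field extensions K_i of F, and the direct sum of the cyclic groups K_i* (for F finite) has rank equal to the number of summands, since p−1 divides |K_i*| = p^{r_i}−1 for each i. -/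
open Polynomial

private lemma pow_mod_eq {M : Type*} [Monoid M] {x : M} {n : ℕ} (h : x ^ n = 1) (m : ℕ) :
    x ^ (m % n) = x ^ m := by
  conv_rhs => rw [← Nat.mod_add_div m n]
  rw [pow_add, pow_mul, h, one_pow, mul_one]

noncomputable def groupAlgEquiv (F : Type*) [Field F] (n : ℕ) [NeZero n] :
    (F[X] ⧸ Ideal.span {(X : F[X]) ^ n - 1}) ≃ₐ[F]
      MonoidAlgebra F (Multiplicative (ZMod n)) := by
  set I : Ideal F[X] := Ideal.span {(X : F[X]) ^ n - 1} with hI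
  set x : F[X] ⧸ I := Ideal.Quotient.mk I X with hx
  have hxn : x ^ n = 1 := by
    rw [hx, ← map_pow, ← map_one (Ideal.Quotient.mk I), Ideal.Quotient.mk_eq_mk_iff_sub_mem]
    exact Ideal.mem_span_singleton_self _
  set g : MonoidAlgebra F (Multiplicative (ZMod n)) :=
    MonoidAlgebra.of F (Multiplicative (ZMod n)) (Multiplicative.ofAdd 1) with hg
  have hgn : g ^ n = 1 := by
    rw [hg, ← map_pow, ← ofAdd_nsmul]
    norm_num
    exact MonoidAlgebra.one_def.symm
  set toQ : Multiplicative (ZMod n) →* (F[X] ⧸ I) :=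
    { toFun := fun a => x ^ (Multiplicative.toAdd a).val
      map_one' := by simp
      map_mul' := by
        intro a b
        show x ^ (Multiplicative.toAdd a + Multiplicative.toAdd b).val = _
        rw [ZMod.val_add, pow_mod_eq hxn, pow_add] } with htoQ
  set φ : MonoidAlgebra F (Multiplicative (ZMod n)) →ₐ[F] (F[X] ⧸ I) :=
    MonoidAlgebra.lift F (F[X] ⧸ I) (Multiplicative (ZMod n)) toQ with hφ
  have hψ0 : ∀ a ∈ I, Polynomial.aeval g a = 0 := by
    intro a ha
    obtain ⟨c, rfl⟩ := Ideal.mem_span_singleton.mp ha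
    rw [map_mul]
    have : (Polynomial.aeval g) ((X : F[X]) ^ n - 1) = 0 := by
      rw [map_sub, map_pow, map_one, aeval_X, hgn, sub_self]
    rw [this, zero_mul]
  set ψ : (F[X] ⧸ I) →ₐ[F] MonoidAlgebra F (Multiplicative (ZMod n)) :=
    Ideal.Quotient.liftₐ I (Polynomial.aeval g) hψ0 with hψ
  refine AlgEquiv.ofAlgHom ψ φ ?_ ?_
  · apply MonoidAlgebra.algHom_ext
    intro a
    show ψ (φ (MonoidAlgebra.of F (Multiplicative (ZMod n)) a)) = _
    rw [hφ, MonoidAlgebra.lift_of]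
    show ψ (x ^ (Multiplicative.toAdd a).val) = _
    rw [map_pow]
    have hψx : ψ x = g := by
      rw [hψ, hx]
      simp
      exact (Ideal.Quotient.lift_mk _ _ _).trans (aeval_X g)
    rw [hψx, hg, ← map_pow, ← ofAdd_nsmul]
    have : (Multiplicative.toAdd a).val • (1 : ZMod n) = Multiplicative.toAdd a := by
      rw [nsmul_eq_mul, mul_one, ZMod.natCast_val, ZMod.cast_id]
    rw [this]
    simp [MonoidAlgebra.of_apply]
    exact Subsingleton.elim _ _
  · apply Ideal.Quotient.algHom_ext
    apply Polynomial.algHom_ext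
    show φ (ψ (Ideal.Quotient.mk I X)) = Ideal.Quotient.mk I X
    have : ψ (Ideal.Quotient.mk I X) = g := by rw [hψ]; simp; exact (Ideal.Quotient.lift_mk _ _ _).trans (aeval_X g)
    rw [this, hg, hφ, MonoidAlgebra.lift_of]
    show x ^ (Multiplicative.toAdd (Multiplicative.ofAdd (1 : ZMod n))).val = _
    rw [toAdd_ofAdd, ZMod.val_one_eq_one_mod, pow_mod_eq hxn, pow_one]

open Polynomial

private lemma key_coprime {F : Type*} [Field F] (h2 : (2 : F) ≠ 0) (a b : F[X])
    (hd : b ∣ a - 2) : IsCoprime a b := by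
  obtain ⟨c, hc⟩ := hd
  refine ⟨C (2⁻¹ : F), -(C (2⁻¹ : F) * c), ?_⟩
  have ha : a = b * c + 2 := by rw [← hc]; ring
  rw [ha]
  have h1 : C (2⁻¹ : F) * (2 : F[X]) = 1 := by
    have : (2 : F[X]) = C (2 : F) := (map_ofNat C 2).symm
    rw [this, ← C_mul, inv_mul_cancel₀ h2, C_1]
  linear_combination h1

private lemma prod_fact {F : Type*} [Field F] (m : ℕ) :
    (X - 1 : F[X]) * ∏ j ∈ Finset.range m, (X ^ (2 ^ j) + 1) = X ^ (2 ^ m) - 1 := by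
  induction m with
  | zero => simp
  | succ m ih =>
    rw [Finset.prod_range_succ, ← mul_assoc, ih]
    have : (2 : ℕ) ^ (m + 1) = 2 ^ m * 2 := by ring
    rw [this, pow_mul]
    ring

private lemma coprime_fact {F : Type*} [Field F] (h2 : (2 : F) ≠ 0) {i j : ℕ} (hij : i < j) :
    IsCoprime (X ^ (2 ^ i) + 1 : F[X]) (X ^ (2 ^ j) + 1) := by
  apply (key_coprime h2 _ _ ?_).symm
  have e : (X ^ (2 ^ j) + 1 : F[X]) - 2 = X ^ (2 ^ j) - 1 := by ring
  rw [e]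
  have d1 : (X ^ (2 ^ i) + 1 : F[X]) ∣ X ^ (2 ^ (i + 1)) - 1 := by
    refine ⟨X ^ (2 ^ i) - 1, ?_⟩
    have : (2 : ℕ) ^ (i + 1) = 2 ^ i * 2 := by ring
    rw [this, pow_mul]
    ring
  refine d1.trans ?_
  have : (2 : ℕ) ^ j = 2 ^ (i + 1) * 2 ^ (j - i - 1) := by
    rw [← pow_add]
    congr 1
    omega
  rw [this, pow_mul]
  simpa using sub_dvd_pow_sub_pow (X ^ (2 ^ (i + 1)) : F[X]) 1 (2 ^ (j - i - 1))

private lemma coprime_fact' {F : Type*} [Field F] (h2 : (2 : F) ≠ 0) (i : ℕ) :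
    IsCoprime (X - 1 : F[X]) (X ^ (2 ^ i) + 1) := by
  apply (key_coprime h2 _ _ ?_).symm
  have e : (X ^ (2 ^ i) + 1 : F[X]) - 2 = X ^ (2 ^ i) - 1 := by ring
  rw [e]
  simpa using sub_dvd_pow_sub_pow (X : F[X]) 1 (2 ^ i)

private lemma card_ker_sq_le {G : Type*} [CommGroup G] [Finite G] (S : Set G)
    (hS : Subgroup.closure S = ⊤) (hfin : S.Finite) :
    Nat.card ↥((powMonoidHom 2 : G →* G).ker) ≤ 2 ^ Nat.card S := by
  set sq : G →* G := powMonoidHom 2 with hsq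
  have hcard1 : Nat.card G = Nat.card (G ⧸ sq.ker) * Nat.card sq.ker :=
    Subgroup.card_eq_card_quotient_mul_card_subgroup sq.ker
  have hcard2 : Nat.card G = Nat.card (G ⧸ sq.range) * Nat.card sq.range :=
    Subgroup.card_eq_card_quotient_mul_card_subgroup sq.range
  have h3 : Nat.card (G ⧸ sq.ker) = Nat.card sq.range :=
    Nat.card_congr (QuotientGroup.quotientKerEquivRange sq).toEquiv
  have hker_eq : Nat.card sq.ker = Nat.card (G ⧸ sq.range) := by
    have hpos : 0 < Nat.card sq.range := Nat.card_pos
    have e1 : Nat.card sq.ker * Nat.card sq.range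
        = Nat.card (G ⧸ sq.range) * Nat.card sq.range := by
      conv_lhs => rw [mul_comm, ← h3]
      rw [← hcard1, hcard2]
    exact Nat.eq_of_mul_eq_mul_right hpos e1
  rw [hker_eq]
  -- B := G ⧸ sq.range has exponent 2
  set B := G ⧸ sq.range with hB
  have hexp : ∀ b : B, b ^ 2 = 1 := by
    intro b
    induction b using QuotientGroup.induction_on with
    | H x =>
      rw [← QuotientGroup.mk_pow, QuotientGroup.eq_one_iff]
      exact ⟨x, rfl⟩
  letI : Module (ZMod 2) (Additive B) := AddCommGroup.zmodModule (by
    intro x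
    rw [← ofMul_toMul x, ← ofMul_pow, hexp]
    rfl)
  set T : Set (Additive B) :=
    (fun u => Additive.ofMul ((QuotientGroup.mk' sq.range) u)) '' S with hT
  have hTspan : Submodule.span (ZMod 2) T = ⊤ := by
    rw [eq_top_iff]
    rintro x -
    have hx : Additive.toMul x ∈ Subgroup.closure ((QuotientGroup.mk' sq.range) '' S) := by
      rw [← MonoidHom.map_closure, hS,
        Subgroup.map_top_of_surjective _ (QuotientGroup.mk'_surjective _)]
      trivial
    have key : ∀ y ∈ Subgroup.closure ((QuotientGroup.mk' sq.range) '' S),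
        Additive.ofMul y ∈ Submodule.span (ZMod 2) T := by
      intro y hy
      induction hy using Subgroup.closure_induction with
      | mem z hz =>
        obtain ⟨u, hu, rfl⟩ := hz
        exact Submodule.subset_span ⟨u, hu, rfl⟩
      | one => exact Submodule.zero_mem _
      | mul a b _ _ ha hb => exact Submodule.add_mem _ ha hb
      | inv a _ ha => exact Submodule.neg_mem _ ha
    simpa using key _ hx
  haveI : Fintype (Additive B) := Fintype.ofFinite _
  haveI : Fintype ↥T := Fintype.ofFinite _
  have h4 : Module.finrank (ZMod 2) (Additive B) ≤ T.toFinset.card := by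
    have := finrank_span_le_card (R := ZMod 2) T
    rwa [hTspan, finrank_top] at this
  have h5 : T.toFinset.card ≤ Nat.card S := by
    rw [Set.toFinset_card, ← Nat.card_eq_fintype_card, Nat.card_coe_set_eq,
      ← Nat.card_coe_set_eq]
    calc T.ncard ≤ S.ncard := Set.ncard_image_le hfin
    _ = Nat.card S := (Nat.card_coe_set_eq S).symm
  have h6 : Nat.card B = 2 ^ Module.finrank (ZMod 2) (Additive B) := by
    have := Module.card_eq_pow_finrank (K := ZMod 2) (V := Additive B)
    rw [ZMod.card 2] at this
    rw [Nat.card_congr Additive.ofMul, Nat.card_eq_fintype_card]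
    exact this
  rw [h6]
  exact Nat.pow_le_pow_right (by norm_num) (le_trans h4 h5)

theorem units_groupAlgebra_zmod_two_pow_rank (F : Type*) [Field F] [Finite F]
    (p : ℕ) [CharP F p] (hp : p ≠ 2) (k : ℕ) :
    ∀ S : Set (MonoidAlgebra F (Multiplicative (ZMod (2 ^ k))))ˣ,
      Subgroup.closure S = ⊤ → (k + 1 : Cardinal) ≤ Cardinal.mk S := by
  intro S hS
  haveI : Fintype F := Fintype.ofFinite F
  have pp : p.Prime := CharP.char_is_prime F p
  have h2 : (2 : F) ≠ 0 := by
    intro h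
    have h' : (((2 : ℕ)) : F) = 0 := by exact_mod_cast h
    have hdvd : p ∣ 2 := (CharP.cast_eq_zero_iff F p 2).mp h'
    exact hp ((Nat.prime_dvd_prime_iff_eq pp Nat.prime_two).mp hdvd)
  haveI : NeZero (2 ^ k) := ⟨pow_ne_zero _ two_ne_zero⟩
  set R := MonoidAlgebra F (Multiplicative (ZMod (2 ^ k))) with hR
  haveI : Finite R := Finite.of_equiv _ ((Finsupp.equivFunOnFinite).symm.trans MonoidAlgebra.coeffEquiv.symm)
  -- the factors of X ^ 2 ^ k - 1
  set f : Fin (k + 1) → F[X] :=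
    fun j => if (j : ℕ) = k then X - 1 else X ^ (2 ^ (j : ℕ)) + 1 with hf
  have hcop : ∀ i j, i ≠ j → IsCoprime (f i) (f j) := by
    intro i j hij
    have hv : (i : ℕ) ≠ (j : ℕ) := fun h => hij (Fin.ext h)
    by_cases hi : (i : ℕ) = k <;> by_cases hj : (j : ℕ) = k
    · exact absurd (hi.trans hj.symm) hv
    · simp only [hf, if_pos hi, if_neg hj]
      exact coprime_fact' h2 _
    · simp only [hf, if_neg hi, if_pos hj]
      exact (coprime_fact' h2 _).symm
    · simp only [hf, if_neg hi, if_neg hj]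
      rcases lt_or_gt_of_ne hv with h | h
      · exact coprime_fact h2 h
      · exact (coprime_fact h2 h).symm
  have hprod : ∏ j, f j = X ^ (2 ^ k) - 1 := by
    rw [Fin.prod_univ_castSucc]
    have hlast : f (Fin.last k) = X - 1 := by simp [hf]
    have hcs : ∀ j : Fin k, f j.castSucc = X ^ (2 ^ (j : ℕ)) + 1 := by
      intro j
      simp [hf, (j.isLt).ne]
    rw [hlast]
    calc (∏ j : Fin k, f j.castSucc) * (X - 1)
        = (X - 1 : F[X]) * ∏ j ∈ Finset.range k, (X ^ (2 ^ j) + 1) := by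
          rw [mul_comm]
          congr 1
          rw [← Fin.prod_univ_eq_prod_range]
          exact Finset.prod_congr rfl fun j _ => hcs j
      _ = X ^ (2 ^ k) - 1 := prod_fact k
  -- the chinese remainder isomorphism
  have hIeq : Ideal.span {(X : F[X]) ^ (2 ^ k) - 1} = ⨅ j, Ideal.span {f j} := by
    rw [Ideal.iInf_span_singleton hcop, hprod]
  have e : R ≃+* ((j : Fin (k + 1)) → F[X] ⧸ Ideal.span {f j}) :=
    ((groupAlgEquiv F (2 ^ k)).symm.toRingEquiv).trans
      ((Ideal.quotEquivOfEq hIeq).trans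
        (Ideal.quotientInfRingEquivPiQuotient _
          (fun i j hij => (Ideal.isCoprime_span_singleton_iff _ _).mpr (hcop i j hij))))
  -- each factor is nontrivial and has -1 ≠ 1
  have hnt : ∀ j, Nontrivial (F[X] ⧸ Ideal.span {f j}) := by
    intro j
    refine Ideal.Quotient.nontrivial_iff.mpr ?_
    rw [Ne, Ideal.span_singleton_eq_top]
    apply Polynomial.not_isUnit_of_natDegree_pos
    by_cases hj : (j : ℕ) = k
    · simp only [hf, if_pos hj]
      have : (X - 1 : F[X]) = X - C 1 := by rw [map_one]
      rw [this, natDegree_X_sub_C]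
      norm_num
    · simp only [hf, if_neg hj]
      have : (X ^ (2 ^ (j : ℕ)) + 1 : F[X]) = X ^ (2 ^ (j : ℕ)) + C 1 := by rw [map_one]
      rw [this, natDegree_X_pow_add_C]
      positivity
  have hne : ∀ j, (-1 : F[X] ⧸ Ideal.span {f j}) ≠ 1 := by
    intro j h
    haveI := hnt j
    have hu : IsUnit (2 : F[X] ⧸ Ideal.span {f j}) := by
      have h1 : IsUnit (2 : F[X]) := by
        rw [show (2 : F[X]) = C 2 from (map_ofNat C 2).symm]
        exact Polynomial.isUnit_C.mpr (isUnit_iff_ne_zero.mpr h2)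
      have := h1.map (Ideal.Quotient.mk (Ideal.span {f j}))
      rwa [map_ofNat] at this
    have hz : (2 : F[X] ⧸ Ideal.span {f j}) = 0 := by linear_combination -h
    rw [hz] at hu
    exact not_isUnit_zero hu
  -- the injection of (Fin (k+1) → ZMod 2) into the 2-torsion of Rˣ
  set sq : Rˣ →* Rˣ := powMonoidHom 2 with hsq
  set v : (Fin (k + 1) → ZMod 2) → ((j : Fin (k + 1)) → F[X] ⧸ Ideal.span {f j}) :=
    fun ε j => (-1) ^ (ε j).val with hv
  have hv2 : ∀ ε, v ε * v ε = 1 := by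
    intro ε
    funext j
    show ((-1 : F[X] ⧸ Ideal.span {f j}) ^ (ε j).val) * ((-1) ^ (ε j).val) = 1
    rw [← mul_pow]
    norm_num
  set w : (Fin (k + 1) → ZMod 2) → R := fun ε => e.symm (v ε) with hw
  have hw2 : ∀ ε, w ε * w ε = 1 := by
    intro ε
    rw [hw, ← map_mul, hv2, map_one]
  set J : (Fin (k + 1) → ZMod 2) → ↥sq.ker := fun ε =>
    ⟨⟨w ε, w ε, hw2 ε, hw2 ε⟩, by
      rw [MonoidHom.mem_ker]
      show (⟨w ε, w ε, hw2 ε, hw2 ε⟩ : Rˣ) ^ 2 = 1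
      apply Units.ext
      rw [Units.val_pow_eq_pow_val, pow_two]
      exact hw2 ε⟩ with hJ
  have hJinj : Function.Injective J := by
    intro ε ε' h
    have hwe : w ε = w ε' := congrArg (fun z : ↥sq.ker => ((z : Rˣ) : R)) h
    have hve : v ε = v ε' := by
      have := congrArg e hwe
      simpa [hw] using this
    funext j
    have hj : ((-1 : F[X] ⧸ Ideal.span {f j}) ^ (ε j).val) = (-1) ^ (ε' j).val :=
      congrFun hve j
    have ha : (ε j).val < 2 := ZMod.val_lt (ε j)
    have hb : (ε' j).val < 2 := ZMod.val_lt (ε' j)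
    have hval : (ε j).val = (ε' j).val := by
      by_contra hne'
      apply hne j
      have d1 : (ε j).val = 0 ∨ (ε j).val = 1 := by omega
      have d2 : (ε' j).val = 0 ∨ (ε' j).val = 1 := by omega
      rcases d1 with h1 | h1 <;> rcases d2 with h2 | h2
      · exact absurd (h1.trans h2.symm) hne'
      · rw [h1, h2, pow_zero, pow_one] at hj
        linear_combination -hj
      · rw [h1, h2, pow_one, pow_zero] at hj
        linear_combination hj
      · exact absurd (h1.trans h2.symm) hne'
    have := congrArg (Nat.cast : ℕ → ZMod 2) hval
    rwa [ZMod.natCast_val, ZMod.cast_id, ZMod.natCast_val, ZMod.cast_id] at this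
  have hker : 2 ^ (k + 1) ≤ Nat.card ↥sq.ker := by
    have := Nat.card_le_card_of_injective J hJinj
    have hsrc : Nat.card (Fin (k + 1) → ZMod 2) = 2 ^ (k + 1) := by
      simp [Nat.card_eq_fintype_card]
    rwa [hsrc] at this
  -- conclude
  by_cases hfin : S.Finite
  · haveI : Fintype S := hfin.fintype
    rw [Cardinal.mk_fintype]
    have hle : Nat.card ↥sq.ker ≤ 2 ^ Nat.card S := card_ker_sq_le S hS hfin
    have : (2 : ℕ) ^ (k + 1) ≤ 2 ^ Nat.card S := le_trans hker hle
    have hfin' : k + 1 ≤ Nat.card S := (Nat.pow_le_pow_iff_right one_lt_two).mp this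
    rw [Nat.card_eq_fintype_card] at hfin'
    exact_mod_cast hfin'
  · haveI : Infinite ↥S := Set.infinite_coe_iff.mpr hfin
    have hinf : Cardinal.aleph0 ≤ Cardinal.mk ↥S := Cardinal.aleph0_le_mk ↥S
    refine le_trans ?_ hinf
    rw [show ((k : Cardinal) + 1) = ((k + 1 : ℕ) : Cardinal) by push_cast; ring]
    exact (Cardinal.nat_lt_aleph0 _).le
end
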